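/- arXiv:2410.19615 — 2 statements merged into one kernel-verified Lean document; each statement's English description precedes it below -/
import Mathlib

section
/- If a continuously differentiable function d : ℝ≥0 → ℝ^k satisfies that d′(t) → 0 as t → ∞ and d is bounded, and the observation error ē(t) satisfies an ISS estimate with input d′, while the regulation error x̃(t) satisfies an ISS estimate with input ε(t) where ‖ε(t)‖ ≤ c₁‖ē(t)‖ for a constant c₁ ≥ 0, then the tracking error ỹ(t) = C x̃(t) converges to 0 as t → ∞. -/
open Filter Set


lemma iss_conv_aux (x u : ℝ → ℝ) (hx : ∀ t, 0 ≤ x t) (hu : ∀ t, 0 ≤ u t)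
    (β : ℝ → ℝ → ℝ) (γ : ℝ → ℝ)
    (hβ_lim : ∀ r : ℝ, 0 ≤ r → Tendsto (fun t => β r t) atTop (nhds 0))
    (hγ_cont : ContinuousOn γ (Ici 0)) (hγ_zero : γ 0 = 0)
    (hu_lim : Tendsto u atTop (nhds 0))
    (hISS : ∀ s t : ℝ, 0 ≤ s → s ≤ t →
      x t ≤ β (x s) (t - s) + γ (⨆ τ ∈ Icc s t, u τ)) :
    Tendsto x atTop (nhds 0) := by
  rw [Metric.tendsto_atTop]
  intro ε hε
  -- continuity of γ at 0 within Ici 0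
  have hγ0 : ContinuousWithinAt γ (Ici 0) 0 := hγ_cont 0 self_mem_Ici
  rw [Metric.continuousWithinAt_iff] at hγ0
  obtain ⟨δ, hδ, hγδ⟩ := hγ0 (ε / 2) (by linarith)
  -- find s₀ with u τ ≤ δ/2 for τ ≥ s₀
  have := (Metric.tendsto_atTop.mp hu_lim) (δ / 2) (by linarith)
  obtain ⟨s₀, hs₀⟩ := this
  set s : ℝ := max s₀ 0 with hs_def
  have hs0 : (0 : ℝ) ≤ s := le_max_right _ _
  have hsup : ∀ t : ℝ, s ≤ t → (⨆ τ ∈ Icc s t, u τ) ∈ Ici (0:ℝ) ∧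
      (⨆ τ ∈ Icc s t, u τ) ≤ δ / 2 := by
    intro t hst
    constructor
    · exact Real.iSup_nonneg fun τ => Real.iSup_nonneg fun _ => hu τ
    · refine Real.iSup_le (fun τ => Real.iSup_le (fun hτ => ?_) (by linarith)) (by linarith)
      have : dist (u τ) 0 < δ / 2 := hs₀ τ (le_trans (le_max_left _ _) hτ.1)
      rw [Real.dist_eq, sub_zero] at this
      exact le_of_lt (lt_of_abs_lt this)
  have hγsmall : ∀ t : ℝ, s ≤ t → γ (⨆ τ ∈ Icc s t, u τ) < ε / 2 := by
    intro t hst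
    obtain ⟨h0, h1⟩ := hsup t hst
    have := hγδ h0 (by rw [Real.dist_eq, sub_zero, abs_of_nonneg h0]; linarith)
    rw [hγ_zero, Real.dist_eq, sub_zero] at this
    exact lt_of_le_of_lt (le_abs_self _) this
  -- β part
  have hβ : Tendsto (fun t => β (x s) (t - s)) atTop (nhds 0) :=
    (hβ_lim (x s) (hx s)).comp (tendsto_atTop_add_const_right atTop (-s) tendsto_id)
  have := (Metric.tendsto_atTop.mp hβ) (ε / 2) (by linarith)
  obtain ⟨T, hT⟩ := this
  refine ⟨max T s, fun t ht => ?_⟩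
  have hts : s ≤ t := le_trans (le_max_right _ _) ht
  have h1 : x t ≤ β (x s) (t - s) + γ (⨆ τ ∈ Icc s t, u τ) := hISS s t hs0 hts
  have h2 : β (x s) (t - s) < ε / 2 := by
    have := hT t (le_trans (le_max_left _ _) ht)
    rw [Real.dist_eq, sub_zero] at this
    exact lt_of_le_of_lt (le_abs_self _) this
  have h3 := hγsmall t hts
  rw [Real.dist_eq, sub_zero, abs_of_nonneg (hx t)]
  linarith

/-- cascade of ISS estimates: if d′ → 0, the observation error ē is ISS
w.r.t. d′, the regulation error x̃ is ISS w.r.t. ε with ‖ε(t)‖ ≤ c₁‖ē(t)‖, then the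
tracking error ỹ = C x̃ converges to 0. -/
theorem iss_cascade_tracking_error_converges (n p k q : ℕ)
    (d : ℝ → EuclideanSpace ℝ (Fin k)) (d' : ℝ → EuclideanSpace ℝ (Fin k))
    (hd : ∀ t : ℝ, HasDerivAt d (d' t) t) (hd'_cont : Continuous d')
    (hd_bdd : ∃ Dm : ℝ, ∀ t : ℝ, 0 ≤ t → ‖d t‖ ≤ Dm)
    (hd'_lim : Tendsto d' atTop (nhds 0))
    (ebar : ℝ → EuclideanSpace ℝ (Fin p)) (hebar_cont : Continuous ebar)
    (xt : ℝ → EuclideanSpace ℝ (Fin n)) (hxt_cont : Continuous xt)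
    (ε : ℝ → EuclideanSpace ℝ (Fin n))
    (β₁ : ℝ → ℝ → ℝ) (γ₁ : ℝ → ℝ) (β₂ : ℝ → ℝ → ℝ) (γ₂ : ℝ → ℝ)
    -- class-KL and class-K properties
    (hβ₁_mono : ∀ t : ℝ, 0 ≤ t → StrictMonoOn (fun r => β₁ r t) (Ici 0))
    (hβ₁_cont : ∀ t : ℝ, 0 ≤ t → ContinuousOn (fun r => β₁ r t) (Ici 0))
    (hβ₁_zero : ∀ t : ℝ, 0 ≤ t → β₁ 0 t = 0)
    (hβ₁_lim : ∀ r : ℝ, 0 ≤ r → Tendsto (fun t => β₁ r t) atTop (nhds 0))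
    (hγ₁_cont : ContinuousOn γ₁ (Ici 0)) (hγ₁_mono : StrictMonoOn γ₁ (Ici 0))
    (hγ₁_zero : γ₁ 0 = 0)
    (hβ₂_mono : ∀ t : ℝ, 0 ≤ t → StrictMonoOn (fun r => β₂ r t) (Ici 0))
    (hβ₂_cont : ∀ t : ℝ, 0 ≤ t → ContinuousOn (fun r => β₂ r t) (Ici 0))
    (hβ₂_zero : ∀ t : ℝ, 0 ≤ t → β₂ 0 t = 0)
    (hβ₂_lim : ∀ r : ℝ, 0 ≤ r → Tendsto (fun t => β₂ r t) atTop (nhds 0))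
    (hγ₂_cont : ContinuousOn γ₂ (Ici 0)) (hγ₂_mono : StrictMonoOn γ₂ (Ici 0))
    (hγ₂_zero : γ₂ 0 = 0)
    -- ISS estimates (standard, from any initial time s ≤ t)
    (hISS₁ : ∀ s t : ℝ, 0 ≤ s → s ≤ t →
      ‖ebar t‖ ≤ β₁ ‖ebar s‖ (t - s) + γ₁ (⨆ τ ∈ Icc s t, ‖d' τ‖))
    (hISS₂ : ∀ s t : ℝ, 0 ≤ s → s ≤ t →
      ‖xt t‖ ≤ β₂ ‖xt s‖ (t - s) + γ₂ (⨆ τ ∈ Icc s t, ‖ε τ‖))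
    (c₁ : ℝ) (hc₁ : 0 ≤ c₁)
    (hε : ∀ t : ℝ, 0 ≤ t → ‖ε t‖ ≤ c₁ * ‖ebar t‖)
    (C : Matrix (Fin q) (Fin n) ℝ) :
    Tendsto (fun t => (show EuclideanSpace ℝ (Fin q) from WithLp.toLp 2 (C.mulVec (xt t))))
      atTop (nhds 0) := by
  have hebar : Tendsto (fun t => ‖ebar t‖) atTop (nhds 0) :=
    iss_conv_aux (fun t => ‖ebar t‖) (fun t => ‖d' t‖) (fun t => norm_nonneg _)
      (fun t => norm_nonneg _) β₁ γ₁ hβ₁_lim hγ₁_cont hγ₁_zero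
      (by simpa using hd'_lim.norm) hISS₁
  have hεlim : Tendsto (fun t => ‖ε t‖) atTop (nhds 0) := by
    have hc : Tendsto (fun t => c₁ * ‖ebar t‖) atTop (nhds 0) := by
      simpa using hebar.const_mul c₁
    refine tendsto_of_tendsto_of_tendsto_of_le_of_le' tendsto_const_nhds hc ?_ ?_
    · exact Eventually.of_forall fun t => norm_nonneg _
    · filter_upwards [eventually_ge_atTop 0] with t ht using hε t ht
  have hxtlim : Tendsto (fun t => ‖xt t‖) atTop (nhds 0) :=
    iss_conv_aux (fun t => ‖xt t‖) (fun t => ‖ε t‖) (fun t => norm_nonneg _)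
      (fun t => norm_nonneg _) β₂ γ₂ hβ₂_lim hγ₂_cont hγ₂_zero hεlim hISS₂
  have hxt0 : Tendsto xt atTop (nhds 0) := tendsto_zero_iff_norm_tendsto_zero.mpr hxtlim
  let L : EuclideanSpace ℝ (Fin n) →ₗ[ℝ] EuclideanSpace ℝ (Fin q) :=
    { toFun := fun v => WithLp.toLp 2 (C.mulVec v)
      map_add' := fun a b => by simp [Matrix.mulVec_add]
      map_smul' := fun c a => by simp [Matrix.mulVec_smul] }
  have hL : Continuous L := L.continuous_of_finiteDimensional
  have h := (hL.tendsto 0).comp hxt0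
  have hL0 : L 0 = 0 := map_zero L
  rw [hL0] at h
  exact h
end

section
/- For any class-KL function β and any r ≥ 0, the function t ↦ β(r, t) converges to 0 as t → ∞, and for a cascade where ‖e(t)‖ ≤ β(‖e(0)‖, t - s) + γ(sup_{s ≤ τ ≤ t}‖w(τ)‖) holds for all 0 ≤ s ≤ t with w(t) → 0, it follows e(t) → 0. -/
open Filter Set

/-- for a class-KL β, β(r,·) → 0 for every r ≥ 0, and for a system with
the time-shifted ISS estimate and input w → 0, the state e → 0. -/
theorem classKL_decay_and_iss_convergence (n : ℕ)
    (β : ℝ → ℝ → ℝ) (γ : ℝ → ℝ)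
    -- β is class-KL
    (hβ_cont : ∀ t : ℝ, 0 ≤ t → ContinuousOn (fun r => β r t) (Ici 0))
    (hβ_mono : ∀ t : ℝ, 0 ≤ t → StrictMonoOn (fun r => β r t) (Ici 0))
    (hβ_zero : ∀ t : ℝ, 0 ≤ t → β 0 t = 0)
    (hβ_dec : ∀ r : ℝ, 0 ≤ r → AntitoneOn (fun t => β r t) (Ici 0))
    (hβ_lim : ∀ r : ℝ, 0 ≤ r → Tendsto (fun t => β r t) atTop (nhds 0))
    -- γ is class-K
    (hγ_cont : ContinuousOn γ (Ici 0))
    (hγ_mono : StrictMonoOn γ (Ici 0))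
    (hγ_zero : γ 0 = 0) :
    (∀ r : ℝ, 0 ≤ r → Tendsto (fun t => β r t) atTop (nhds 0)) ∧
    (∀ (w : ℝ → ℝ) (e : ℝ → EuclideanSpace ℝ (Fin n)),
      Continuous w → (∀ t : ℝ, 0 ≤ w t) → Tendsto w atTop (nhds 0) →
      (∀ s t : ℝ, 0 ≤ s → s ≤ t →
        ‖e t‖ ≤ β ‖e 0‖ (t - s) + γ (⨆ τ ∈ Icc s t, w τ)) →
      Tendsto e atTop (nhds 0)) := by
  refine ⟨hβ_lim, ?_⟩
  intro w e hw_cont hw_nonneg hw_lim hiss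
  rw [NormedAddCommGroup.tendsto_nhds_zero]
  simp only [eventually_atTop]
  intro ε hε
  have hγ0 : Tendsto γ (nhdsWithin 0 (Ici 0)) (nhds 0) := by
    have := hγ_cont 0 self_mem_Ici
    simpa [ContinuousWithinAt, hγ_zero] using this
  have hmem : {x : ℝ | γ x < ε / 2} ∈ nhdsWithin 0 (Ici 0) :=
    hγ0 (by rw [mem_nhds_iff]; exact ⟨{x | x < ε/2}, fun x hx => hx, isOpen_Iio, by simpa using half_pos hε⟩)
  rw [Metric.mem_nhdsWithin_iff] at hmem
  obtain ⟨δ, hδ, hδball⟩ := hmem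
  set δ' := δ / 2 with hδ'def
  have hδ'pos : 0 < δ' := half_pos hδ
  have hγδ' : γ δ' < ε / 2 := by
    apply hδball
    refine ⟨?_, hδ'pos.le⟩
    simp only [Metric.mem_ball, Real.dist_eq, sub_zero, abs_of_nonneg hδ'pos.le]
    linarith
  have hwev : ∀ᶠ τ in atTop, w τ ≤ δ' := by
    filter_upwards [hw_lim (Metric.ball_mem_nhds 0 hδ'pos)] with τ hτ
    simp only [mem_preimage, Metric.mem_ball, Real.dist_eq, sub_zero,
      abs_of_nonneg (hw_nonneg τ)] at hτ
    exact hτ.le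
  obtain ⟨S₀, hS₀⟩ := hwev.exists_forall_of_atTop
  set S := max S₀ 0 with hSdef
  have hSnn : 0 ≤ S := le_max_right _ _
  have hSw : ∀ τ, S ≤ τ → w τ ≤ δ' := fun τ hτ => hS₀ τ ((le_max_left _ _).trans hτ)
  have hβev : ∀ᶠ u in atTop, β ‖e 0‖ u < ε / 2 := by
    filter_upwards [(hβ_lim _ (norm_nonneg (e 0))) (Metric.ball_mem_nhds 0 (half_pos hε))] with u hu
    simp only [mem_preimage, Metric.mem_ball, Real.dist_eq, sub_zero] at hu
    exact lt_of_le_of_lt (le_abs_self _) hu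
  obtain ⟨T₀, hT₀⟩ := hβev.exists_forall_of_atTop
  set T := max T₀ 0 with hTdef
  refine ⟨S + T, fun t ht => ?_⟩
  have hTnn : 0 ≤ T := le_max_right _ _
  have hSt : S ≤ t := le_trans (le_add_of_nonneg_right hTnn) ht
  have hsup_le : (⨆ τ ∈ Icc S t, w τ) ≤ δ' :=
    Real.iSup_le (fun τ => Real.iSup_le (fun hτ => hSw τ hτ.1) hδ'pos.le) hδ'pos.le
  have hsup_nonneg : 0 ≤ ⨆ τ ∈ Icc S t, w τ :=
    Real.iSup_nonneg fun τ => Real.iSup_nonneg fun _ => hw_nonneg τ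
  have hβlt : β ‖e 0‖ (t - S) < ε / 2 := by
    apply hT₀
    have : T₀ ≤ T := le_max_left _ _
    linarith
  calc ‖e t‖ ≤ β ‖e 0‖ (t - S) + γ (⨆ τ ∈ Icc S t, w τ) := hiss S t hSnn hSt
    _ ≤ β ‖e 0‖ (t - S) + γ δ' :=
        add_le_add le_rfl (hγ_mono.monotoneOn hsup_nonneg hδ'pos.le hsup_le)
    _ < ε / 2 + ε / 2 := by linarith
    _ = ε := by ring
end
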